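/- Every real invertible n×n matrix g with positive determinant admits a unique decomposition g = n·a·k, where n is unit upper triangular, a is diagonal with strictly positive diagonal entries, and k ∈ SO(n) (Iwasawa/QR decomposition); restricted to SL(n,ℝ), det a = 1. -/

import Mathlib

open Matrix

namespace NAK

variable {m : ℕ}

lemma posDef_mul_transpose (g : Matrix (Fin m) (Fin m) ℝ) (hg : IsUnit g.det) :
    (g * gᵀ).PosDef := by
  refine Matrix.PosDef.of_dotProduct_mulVec_pos ?_ ?_
  · simp [Matrix.IsHermitian, Matrix.conjTranspose_eq_transpose_of_trivial,
      Matrix.transpose_mul]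
  · intro x hx
    have hxv : gᵀ *ᵥ x ≠ 0 := by
      intro h
      have hd : gᵀ.det ≠ 0 := by simpa using hg.ne_zero
      exact hx (Matrix.eq_zero_of_mulVec_eq_zero hd h)
    have key : (star x) ⬝ᵥ ((g * gᵀ) *ᵥ x) = (gᵀ *ᵥ x) ⬝ᵥ (gᵀ *ᵥ x) := by
      simp only [star_trivial, ← Matrix.mulVec_mulVec]
      rw [Matrix.dotProduct_mulVec, ← Matrix.transpose_transpose g,
        Matrix.vecMul_transpose, Matrix.transpose_transpose]
    rw [key]
    have h0 : 0 ≤ (gᵀ *ᵥ x) ⬝ᵥ (gᵀ *ᵥ x) := Finset.sum_nonneg fun i _ => mul_self_nonneg _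
    rcases h0.lt_or_eq with h | h
    · exact h
    · exact absurd ((dotProduct_self_eq_zero).mp h.symm) hxv

lemma posDef_submatrix {S : Matrix (Fin m) (Fin m) ℝ} (hS : S.PosDef) (e : Fin m ≃ Fin m) :
    (S.submatrix e e).PosDef := by
  refine Matrix.PosDef.of_dotProduct_mulVec_pos (hS.1.submatrix e) ?_
  intro x hx
  have hx' : (x ∘ e.symm) ≠ 0 := by
    intro h
    apply hx
    funext i
    simpa using congrFun h (e i)
  have hpos := hS.dotProduct_mulVec_pos hx'
  rw [Matrix.submatrix_mulVec_equiv]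
  have key : x ⬝ᵥ ((S *ᵥ (x ∘ e.symm)) ∘ e) = (x ∘ e.symm) ⬝ᵥ (S *ᵥ (x ∘ e.symm)) := by
    rw [dotProduct, dotProduct]
    exact Fintype.sum_equiv e _ _ (fun i => by simp)
  rw [star_trivial, key]
  simpa using hpos

/-- `LDL` decomposition packaged for `Fin m` over `ℝ`. -/
lemma ldl_exists {P : Matrix (Fin m) (Fin m) ℝ} (hP : P.PosDef) :
    ∃ (L : Matrix (Fin m) (Fin m) ℝ) (d : Fin m → ℝ),
      (∀ i j, i < j → L i j = 0) ∧ IsUnit L.det ∧ (∀ i, 0 < d i) ∧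
      L * Matrix.diagonal d * Lᵀ = P := by
  letI hwf : WellFoundedLT (Fin m) := inferInstance
  set Li : Matrix (Fin m) (Fin m) ℝ := LDL.lowerInv hP with hLi
  have h := LDL.lower_conj_diag hP
  simp only [LDL.lower, LDL.diag] at h
  have e : (fun a b => LinearOrder.toDecidableEq a b : DecidableEq (Fin m)) = instDecidableEqFin m :=
    Subsingleton.elim _ _
  rw [e, Matrix.conjTranspose_eq_transpose_of_trivial] at h
  have hLiu : IsUnit Li.det := by
    rcases Nat.eq_zero_or_pos m with hm | hm
    · subst hm
      rw [Matrix.det_isEmpty]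
      exact isUnit_one
    · by_contra hnot
      rw [Matrix.nonsing_inv_apply_not_isUnit _ hnot] at h
      have hdP := hP.det_pos
      rw [← h] at hdP
      haveI : Nonempty (Fin m) := ⟨⟨0, hm⟩⟩
      simp [Matrix.det_zero] at hdP
  haveI : Invertible Li := Li.invertibleOfIsUnitDet hLiu
  have hLitri : Li.BlockTriangular OrderDual.toDual := fun i j hij =>
    LDL.lowerInv_triangular hP hij
  refine ⟨Li⁻¹, LDL.diagEntries hP, ?_, ?_, ?_, h⟩
  · intro i j hij
    exact Matrix.blockTriangular_inv_of_blockTriangular hLitri hij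
  · rw [Matrix.det_nonsing_inv]
    simpa using hLiu.unit⁻¹.isUnit
  · intro i
    have hrow : Li i ≠ 0 := by
      intro hz
      have : Li.det = 0 := Matrix.det_eq_zero_of_row_eq_zero i (fun j => congrFun hz j)
      exact hLiu.ne_zero this
    have hval : LDL.diagEntries hP i = (Li i) ⬝ᵥ (P *ᵥ Li i) := by
      simp [LDL.diagEntries, hLi, PiLp.inner_apply, dotProduct, mul_comm]
    rw [hval]
    simpa using hP.dotProduct_mulVec_pos hrow

lemma tri_of {N : Matrix (Fin m) (Fin m) ℝ} (h : ∀ i j, j < i → N i j = 0) :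
    N.BlockTriangular id := fun i j hij => h i j hij

lemma det_unitri {N : Matrix (Fin m) (Fin m) ℝ} (h : ∀ i j, j < i → N i j = 0)
    (h1 : ∀ i, N i i = 1) : N.det = 1 := by
  rw [Matrix.det_of_upperTriangular (tri_of h)]
  simp [h1]

lemma diag_mul {P Q : Matrix (Fin m) (Fin m) ℝ} (hP : P.BlockTriangular id)
    (hQ : Q.BlockTriangular id) (i : Fin m) : (P * Q) i i = P i i * Q i i := by
  rw [Matrix.mul_apply]
  refine Finset.sum_eq_single i ?_ (by simp)
  intro k _ hk
  rcases lt_or_gt_of_ne hk with h | h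
  · rw [hP (show (id k : Fin m) < id i from h), zero_mul]
  · rw [hQ (show (id i : Fin m) < id k from h), mul_zero]

lemma exists_nak (g : Matrix (Fin m) (Fin m) ℝ) (hg : 0 < g.det) :
    ∃ N A K : Matrix (Fin m) (Fin m) ℝ,
      ((∀ i j, j < i → N i j = 0) ∧ (∀ i, N i i = 1)) ∧
      ((∀ i j, i ≠ j → A i j = 0) ∧ (∀ i, 0 < A i i)) ∧
      (Kᵀ * K = 1 ∧ K.det = 1) ∧ g = N * A * K := by
  have hgu : IsUnit g.det := isUnit_iff_ne_zero.2 hg.ne'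
  set S := g * gᵀ with hSdef
  have hS : S.PosDef := posDef_mul_transpose g hgu
  set r : Fin m ≃ Fin m := Fin.revPerm with hr
  have hP : (S.submatrix r r).PosDef := posDef_submatrix hS r
  obtain ⟨L, d, hLt, hLu, hdpos, hLdL⟩ := ldl_exists hP
  set N0 : Matrix (Fin m) (Fin m) ℝ := L.submatrix r r with hN0
  have hN0t : ∀ i j : Fin m, j < i → N0 i j = 0 := by
    intro i j hij
    have hlt : (r i : Fin m) < r j := by
      simp only [hr, Fin.revPerm_apply]
      exact Fin.rev_lt_rev.mpr hij
    exact hLt _ _ hlt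
  have hN0tri : N0.BlockTriangular id := tri_of hN0t
  have hS_eq : N0 * Matrix.diagonal (d ∘ ⇑r) * N0ᵀ = S := by
    have step : N0 * Matrix.diagonal (d ∘ ⇑r) * N0ᵀ
        = (L * Matrix.diagonal d * Lᵀ).submatrix r r := by
      rw [hN0, transpose_submatrix, ← Matrix.submatrix_diagonal_equiv,
        Matrix.submatrix_mul_equiv, Matrix.submatrix_mul_equiv]
    rw [step, hLdL]
    ext i j
    simp [hr]
  have hdetN0 : IsUnit N0.det := by
    rw [hN0, Matrix.det_submatrix_equiv_self]
    exact hLu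
  have hc : ∀ i, N0 i i ≠ 0 := by
    intro i
    have hdet : N0.det = ∏ i, N0 i i := Matrix.det_of_upperTriangular hN0tri
    have : (∏ i, N0 i i) ≠ 0 := by rw [← hdet]; exact hdetN0.ne_zero
    exact Finset.prod_ne_zero_iff.mp this i (Finset.mem_univ i)
  set N : Matrix (Fin m) (Fin m) ℝ := N0 * Matrix.diagonal (fun i => (N0 i i)⁻¹) with hN
  have hNapp : ∀ i j, N i j = N0 i j * (N0 j j)⁻¹ := by
    intro i j; rw [hN, Matrix.mul_diagonal]
  have hNt : ∀ i j : Fin m, j < i → N i j = 0 := fun i j hij => by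
    rw [hNapp, hN0t i j hij, zero_mul]
  have hNd : ∀ i, N i i = 1 := fun i => by rw [hNapp, mul_inv_cancel₀ (hc i)]
  set e : Fin m → ℝ := fun i => (N0 i i) ^ 2 * d (r i) with he
  have hepos : ∀ i, 0 < e i := fun i =>
    mul_pos (lt_of_le_of_ne (sq_nonneg _) (Ne.symm (pow_ne_zero 2 (hc i)))) (hdpos _)
  have hmid : Matrix.diagonal (fun i => (N0 i i)⁻¹) * Matrix.diagonal e *
      Matrix.diagonal (fun i => (N0 i i)⁻¹) = Matrix.diagonal (d ∘ ⇑r) := by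
    have hfun : (fun i => (N0 i i)⁻¹ * e i * (N0 i i)⁻¹) = d ∘ ⇑r := by
      funext i
      have hci := hc i
      simp only [he, Function.comp_apply]
      field_simp
    simp only [Matrix.diagonal_mul_diagonal]
    exact congrArg Matrix.diagonal hfun
  have hkey : N * Matrix.diagonal e * Nᵀ = S := by
    rw [← hS_eq, hN]
    rw [Matrix.transpose_mul, Matrix.diagonal_transpose]
    calc N0 * Matrix.diagonal (fun i => (N0 i i)⁻¹) * Matrix.diagonal e *
          (Matrix.diagonal (fun i => (N0 i i)⁻¹) * N0ᵀ)
        = N0 * ((Matrix.diagonal (fun i => (N0 i i)⁻¹) * Matrix.diagonal e *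
            Matrix.diagonal (fun i => (N0 i i)⁻¹)) * N0ᵀ) := by
          simp only [Matrix.mul_assoc]
      _ = N0 * (Matrix.diagonal (d ∘ ⇑r) * N0ᵀ) := by rw [hmid]
      _ = N0 * Matrix.diagonal (d ∘ ⇑r) * N0ᵀ := by
          simp only [Matrix.mul_assoc]
  set A : Matrix (Fin m) (Fin m) ℝ := Matrix.diagonal (fun i => Real.sqrt (e i)) with hA
  have hAd : ∀ i, A i i = Real.sqrt (e i) := fun i => by rw [hA, Matrix.diagonal_apply_eq]
  have hApos : ∀ i, 0 < A i i := fun i => by rw [hAd]; exact Real.sqrt_pos.mpr (hepos i)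
  have hAoff : ∀ i j : Fin m, i ≠ j → A i j = 0 := fun i j hij => by
    rw [hA, Matrix.diagonal_apply_ne _ hij]
  have hAA : A * A = Matrix.diagonal e := by
    rw [hA]
    simp only [Matrix.diagonal_mul_diagonal]
    exact congrArg Matrix.diagonal (funext fun i => Real.mul_self_sqrt (hepos i).le)
  have hAT : Aᵀ = A := by rw [hA, Matrix.diagonal_transpose]
  have hdetA : IsUnit A.det := by
    rw [hA, Matrix.det_diagonal]
    exact isUnit_iff_ne_zero.2 (Finset.prod_ne_zero_iff.mpr fun i _ =>
      (Real.sqrt_pos.mpr (hepos i)).ne')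
  have hdetN : N.det = 1 := det_unitri hNt hNd
  set M : Matrix (Fin m) (Fin m) ℝ := N * A with hM
  have hdetM : IsUnit M.det := by
    rw [hM, Matrix.det_mul, hdetN, one_mul]
    exact hdetA
  have hdetMT : IsUnit Mᵀ.det := by rwa [Matrix.det_transpose]
  have hgg : g * gᵀ = M * Mᵀ := by
    rw [hM, Matrix.transpose_mul, hAT, ← hSdef, ← hkey, ← hAA]
    simp only [Matrix.mul_assoc]
  set K : Matrix (Fin m) (Fin m) ℝ := M⁻¹ * g with hK
  have hgNAK : g = N * A * K := by
    rw [hK, ← hM, Matrix.mul_nonsing_inv_cancel_left _ _ hdetM]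
  have hKKT : K * Kᵀ = 1 := by
    rw [hK, Matrix.transpose_mul, Matrix.transpose_nonsing_inv]
    calc M⁻¹ * g * (gᵀ * Mᵀ⁻¹) = M⁻¹ * (g * gᵀ * Mᵀ⁻¹) := by
          simp only [Matrix.mul_assoc]
      _ = M⁻¹ * (M * Mᵀ * Mᵀ⁻¹) := by rw [hgg]
      _ = 1 := by
          rw [Matrix.mul_nonsing_inv_cancel_right _ _ hdetMT,
            Matrix.nonsing_inv_mul _ hdetM]
  have hKTK : Kᵀ * K = 1 := mul_eq_one_comm.mp hKKT
  have hdetKpos : 0 < K.det := by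
    rw [hK, Matrix.det_mul, Matrix.det_nonsing_inv, Ring.inverse_eq_inv]
    have : 0 < M.det := by
      rw [hM, Matrix.det_mul, hdetN, one_mul, hA, Matrix.det_diagonal]
      exact Finset.prod_pos fun i _ => Real.sqrt_pos.mpr (hepos i)
    exact mul_pos (inv_pos.mpr this) hg
  have hdetK : K.det = 1 := by
    have hsq : K.det * K.det = 1 := by
      have := congrArg Matrix.det hKTK
      rwa [Matrix.det_mul, Matrix.det_transpose, Matrix.det_one] at this
    have hfac : (K.det - 1) * (K.det + 1) = 0 := by linear_combination hsq
    rcases mul_eq_zero.mp hfac with h | h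
    · linarith
    · linarith
  exact ⟨N, A, K, ⟨hNt, hNd⟩, ⟨hAoff, hApos⟩, ⟨hKTK, hdetK⟩, hgNAK⟩

lemma cancel_left {A X Y : Matrix (Fin m) (Fin m) ℝ} (h : IsUnit A.det)
    (hE : A * X = A * Y) : X = Y := by
  have := congrArg (fun Z => A⁻¹ * Z) hE
  simpa [Matrix.nonsing_inv_mul_cancel_left _ _ h] using this

lemma nak_unique (N1 A1 K1 N2 A2 K2 : Matrix (Fin m) (Fin m) ℝ)
    (hN1 : (∀ i j, j < i → N1 i j = 0) ∧ (∀ i, N1 i i = 1))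
    (hA1 : (∀ i j, i ≠ j → A1 i j = 0) ∧ (∀ i, 0 < A1 i i))
    (hK1 : K1ᵀ * K1 = 1 ∧ K1.det = 1)
    (hN2 : (∀ i j, j < i → N2 i j = 0) ∧ (∀ i, N2 i i = 1))
    (hA2 : (∀ i j, i ≠ j → A2 i j = 0) ∧ (∀ i, 0 < A2 i i))
    (hK2 : K2ᵀ * K2 = 1 ∧ K2.det = 1)
    (heq : N1 * A1 * K1 = N2 * A2 * K2) :
    N1 = N2 ∧ A1 = A2 ∧ K1 = K2 := by
  have hA1diag : A1 = Matrix.diagonal (fun i => A1 i i) := by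
    ext i j
    by_cases h : i = j
    · subst h; simp
    · rw [hA1.1 i j h, Matrix.diagonal_apply_ne _ h]
  have hA2diag : A2 = Matrix.diagonal (fun i => A2 i i) := by
    ext i j
    by_cases h : i = j
    · subst h; simp
    · rw [hA2.1 i j h, Matrix.diagonal_apply_ne _ h]
  have uN1 : IsUnit N1.det := by rw [det_unitri hN1.1 hN1.2]; exact isUnit_one
  have uN2 : IsUnit N2.det := by rw [det_unitri hN2.1 hN2.2]; exact isUnit_one
  have uA1 : IsUnit A1.det := by
    rw [hA1diag, Matrix.det_diagonal]
    exact isUnit_iff_ne_zero.2 (Finset.prod_ne_zero_iff.mpr fun i _ => (hA1.2 i).ne')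
  have uA2 : IsUnit A2.det := by
    rw [hA2diag, Matrix.det_diagonal]
    exact isUnit_iff_ne_zero.2 (Finset.prod_ne_zero_iff.mpr fun i _ => (hA2.2 i).ne')
  have hK1o' : K1 * K1ᵀ = 1 := mul_eq_one_comm.mp hK1.1
  set M : Matrix (Fin m) (Fin m) ℝ := A2⁻¹ * (N2⁻¹ * (N1 * A1)) with hMdef
  have hMK : M * K1 = K2 := by
    have h0 : N2 * (A2 * (M * K1)) = N2 * (A2 * K2) := by
      rw [hMdef]
      simp only [Matrix.mul_assoc] at heq ⊢
      rw [Matrix.mul_nonsing_inv_cancel_left _ _ uA2,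
        Matrix.mul_nonsing_inv_cancel_left _ _ uN2]
      exact heq
    exact cancel_left uA2 (cancel_left uN2 h0)
  have hM12 : N2 * (A2 * M) = N1 * A1 := by
    rw [hMdef, Matrix.mul_nonsing_inv_cancel_left _ _ uA2,
      Matrix.mul_nonsing_inv_cancel_left _ _ uN2]
  have hMKt : M = K2 * K1ᵀ := by
    rw [← hMK, Matrix.mul_assoc, hK1o', Matrix.mul_one]
  have hMo : Mᵀ * M = 1 := by
    rw [hMKt, Matrix.transpose_mul, Matrix.transpose_transpose, Matrix.mul_assoc,
      ← Matrix.mul_assoc K2ᵀ K2 K1ᵀ, hK2.1, Matrix.one_mul, hK1o']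
  haveI : Invertible M := invertibleOfLeftInverse _ _ hMo
  have hMinv : M⁻¹ = Mᵀ := Matrix.inv_eq_left_inv hMo
  have hMtri : M.BlockTriangular id := by
    have t1 : (A2⁻¹).BlockTriangular id := by
      rw [hA2diag, Matrix.inv_diagonal]
      exact Matrix.blockTriangular_diagonal _
    have t2 : (N2⁻¹).BlockTriangular id := by
      haveI := N2.invertibleOfIsUnitDet uN2
      exact Matrix.blockTriangular_inv_of_blockTriangular (tri_of hN2.1)
    have t3 : A1.BlockTriangular id := by
      rw [hA1diag]; exact Matrix.blockTriangular_diagonal _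
    exact t1.mul (t2.mul ((tri_of hN1.1).mul t3))
  have hMup : ∀ i j : Fin m, i < j → M i j = 0 := by
    have h := Matrix.blockTriangular_inv_of_blockTriangular hMtri
    rw [hMinv] at h
    intro i j hij
    have := h (i := j) (j := i) hij
    simpa using this
  have hMoff : ∀ i j : Fin m, i ≠ j → M i j = 0 := by
    intro i j hij
    rcases lt_or_gt_of_ne hij with h | h
    · exact hMup i j h
    · exact hMtri h
  have hMdiagpos : ∀ i, 0 < M i i := by
    intro i
    have hassoc : N2 * A2 * M = N1 * A1 := by rw [Matrix.mul_assoc]; exact hM12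
    have t3 : A1.BlockTriangular id := by
      rw [hA1diag]; exact Matrix.blockTriangular_diagonal _
    have t4 : A2.BlockTriangular id := by
      rw [hA2diag]; exact Matrix.blockTriangular_diagonal _
    have hL : (N2 * A2 * M) i i = A2 i i * M i i := by
      rw [diag_mul ((tri_of hN2.1).mul t4) hMtri, diag_mul (tri_of hN2.1) t4,
        hN2.2, one_mul]
    have hR : (N1 * A1) i i = A1 i i := by
      rw [diag_mul (tri_of hN1.1) t3, hN1.2, one_mul]
    have hprod : A2 i i * M i i = A1 i i := by rw [← hL, ← hR, hassoc]
    by_contra hle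
    push_neg at hle
    have : A2 i i * M i i ≤ 0 := mul_nonpos_of_nonneg_of_nonpos (hA2.2 i).le hle
    linarith [hA1.2 i]
  have hMdiag1 : ∀ i, M i i = 1 := by
    intro i
    have h1 : (Mᵀ * M) i i = 1 := by rw [hMo]; simp
    rw [Matrix.mul_apply] at h1
    have h2 : ∑ k, Mᵀ i k * M k i = M i i * M i i := by
      refine Finset.sum_eq_single i ?_ (by simp [Matrix.transpose_apply])
      intro k _ hk
      rw [Matrix.transpose_apply, hMoff k i hk, mul_zero]
    rw [h2] at h1
    have hfac : (M i i - 1) * (M i i + 1) = 0 := by linear_combination h1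
    rcases mul_eq_zero.mp hfac with h | h
    · linarith
    · linarith [hMdiagpos i]
  have hM1 : M = 1 := by
    ext i j
    by_cases h : i = j
    · subst h; rw [hMdiag1]; simp
    · rw [hMoff i j h, Matrix.one_apply_ne h]
  have hKeq : K1 = K2 := by rw [← hMK, hM1, Matrix.one_mul]
  have hNA : N2 * A2 = N1 * A1 := by
    have h := hM12
    rw [hM1, Matrix.mul_one] at h
    exact h
  have hAdiageq : ∀ i, A1 i i = A2 i i := by
    intro i
    have t3 : A1.BlockTriangular id := by
      rw [hA1diag]; exact Matrix.blockTriangular_diagonal _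
    have t4 : A2.BlockTriangular id := by
      rw [hA2diag]; exact Matrix.blockTriangular_diagonal _
    have hR : (N1 * A1) i i = A1 i i := by
      rw [diag_mul (tri_of hN1.1) t3, hN1.2, one_mul]
    have hL : (N2 * A2) i i = A2 i i := by
      rw [diag_mul (tri_of hN2.1) t4, hN2.2, one_mul]
    rw [← hR, ← hNA, hL]
  have hAeq : A1 = A2 := by
    rw [hA1diag, hA2diag]
    exact congrArg Matrix.diagonal (funext hAdiageq)
  have hNeq : N1 = N2 := by
    have h : N1 * A1 = N2 * A1 := by rw [← hNA, hAeq]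
    have h2 := congrArg (fun Z => Z * A1⁻¹) h
    simpa [Matrix.mul_nonsing_inv_cancel_right _ _ uA1] using h2
  exact ⟨hNeq, hAeq, hKeq⟩


end NAK

theorem stmt16 (n : ℕ) :
    (∀ g : Matrix (Fin n) (Fin n) ℝ, 0 < g.det →
      ∃! t : Matrix (Fin n) (Fin n) ℝ × Matrix (Fin n) (Fin n) ℝ
          × Matrix (Fin n) (Fin n) ℝ,
        ((∀ i j : Fin n, j < i → t.1 i j = 0) ∧ (∀ i : Fin n, t.1 i i = 1)) ∧
        ((∀ i j : Fin n, i ≠ j → t.2.1 i j = 0) ∧ (∀ i : Fin n, 0 < t.2.1 i i)) ∧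
        (t.2.2ᵀ * t.2.2 = 1 ∧ t.2.2.det = 1) ∧
        g = t.1 * t.2.1 * t.2.2) ∧
    (∀ g na a k : Matrix (Fin n) (Fin n) ℝ, g.det = 1 →
      ((∀ i j : Fin n, j < i → na i j = 0) ∧ (∀ i : Fin n, na i i = 1)) →
      ((∀ i j : Fin n, i ≠ j → a i j = 0) ∧ (∀ i : Fin n, 0 < a i i)) →
      (kᵀ * k = 1 ∧ k.det = 1) → g = na * a * k → a.det = 1) := by
  constructor
  · intro g hg
    obtain ⟨N, A, K, hN, hA, hK, hgeq⟩ := NAK.exists_nak g hg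
    refine ⟨(N, A, K), ⟨hN, hA, hK, hgeq⟩, ?_⟩
    rintro ⟨N1, A1, K1⟩ ⟨h1, h2, h3, h4⟩
    obtain ⟨e1, e2, e3⟩ :=
      NAK.nak_unique N1 A1 K1 N A K h1 h2 h3 hN hA hK (h4.symm.trans hgeq)
    simp only [Prod.mk.injEq]
    exact ⟨e1, e2, e3⟩
  · intro g na a k hdet hna ha hk hgeq
    have hdet_na : na.det = 1 := NAK.det_unitri hna.1 hna.2
    have hmul : g.det = na.det * a.det * k.det := by
      rw [hgeq, Matrix.det_mul, Matrix.det_mul]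
    rw [hdet, hdet_na, hk.2, one_mul, mul_one] at hmul
    exact hmul.symm
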